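/- arXiv:2602.16236 — 2 statements merged into one kernel-verified Lean document; each statement's English description precedes it below -/
import Mathlib

section
/- In the setting where Z = {0,1,2}, Q is i.i.d. with q(0)=φ, q(1)=1−φ−ψ, q(2)=ψ (φ ∈ (0,1/2), ψ ∈ (0,1/2−φ)), and P conditions Z_2,...,Z_T to be all equal to 2 when Z_1 = 0 and to be i.i.d. q otherwise: the expected average conditional total variation distance satisfies V_T = ((T−1)/T)·φ·(1−ψ). -/
open scoped Classical

/-- Expected average conditional total variation distance in the impossibility
construction: `V_T = ((T−1)/T)·φ·(1−ψ)`. -/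
theorem stmt_16 (T : ℕ) (hT : 2 ≤ T) (φ ψ : ℝ)
    (hφ : φ ∈ Set.Ioo (0 : ℝ) (1 / 2)) (hψ : ψ ∈ Set.Ioo (0 : ℝ) (1 / 2 - φ))
    (q : Fin 3 → ℝ)
    (hq : ∀ z, q z = if z = 0 then φ else if z = 1 then 1 - φ - ψ else ψ)
    (P : (Fin T → Fin 3) → ℝ)
    (hP : ∀ x, P x = if x ⟨0, by omega⟩ = 0 then
        (if ∀ t : Fin T, t ≠ ⟨0, by omega⟩ → x t = 2 then φ else 0)
      else ∏ t, q (x t))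
    -- the conditional kernel of `P` at time `t` given the past, along trajectory `x`
    (Pker : Fin T → (Fin T → Fin 3) → Fin 3 → ℝ)
    (hPker : ∀ t x z, Pker t x z = if t.val = 0 then q z
      else (if x ⟨0, by omega⟩ = 0 then (if z = 2 then 1 else 0) else q z))
    -- per-step conditional total variation distance (the kernel of `Q` is `q`)
    (v : (Fin T → Fin 3) → Fin T → ℝ)
    (hv : ∀ x t, v x t = (1 / 2) * ∑ z, |Pker t x z - q z|)
    (VT : ℝ) (hVT : VT = ∑ x, P x * ((1 / (T : ℝ)) * ∑ t, v x t)) :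
    VT = (((T : ℝ) - 1) / T) * φ * (1 - ψ) := by

  obtain ⟨hφ0, hφ1⟩ := hφ
  obtain ⟨hψ0, hψ1⟩ := hψ
  have hTpos : (0:ℝ) < T := by positivity
  set t0 : Fin T := ⟨0, by omega⟩ with ht0
  have hq0 : q 0 = φ := by simp [hq]
  have hq1 : q 1 = 1 - φ - ψ := by simp [hq]
  have hq2 : q 2 = ψ := by simp [hq]
  have hvt0 : ∀ x, v x t0 = 0 := by
    intro x; rw [hv]; simp [hPker, ht0]
  have hv0 : ∀ x t, x t0 ≠ 0 → v x t = 0 := by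
    intro x t hx
    rw [hv]
    by_cases h : t.val = 0 <;> simp [hPker, h, hx]
  have hv1 : ∀ (x : Fin T → Fin 3) t, x t0 = 0 → t ≠ t0 → v x t = 1 - ψ := by
    intro x t hx ht
    have htv : t.val ≠ 0 := by
      intro h; exact ht (Fin.ext (by simpa using h))
    rw [hv]
    have hker : ∀ z, Pker t x z = if z = 2 then 1 else 0 := by
      intro z; rw [hPker]; simp [htv, hx]
    rw [Fin.sum_univ_three, hker, hker, hker, hq0, hq1, hq2]
    have a1 : |(if (0:Fin 3) = 2 then (1:ℝ) else 0) - φ| = φ := by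
      rw [if_neg (by decide), abs_of_nonpos (by linarith)]; ring
    have a2 : |(if (1:Fin 3) = 2 then (1:ℝ) else 0) - (1 - φ - ψ)| = 1 - φ - ψ := by
      rw [if_neg (by decide), abs_of_nonpos (by linarith)]; ring
    have a3 : |(if (2:Fin 3) = 2 then (1:ℝ) else 0) - ψ| = 1 - ψ := by
      rw [if_pos rfl, abs_of_nonneg (by linarith)]
    rw [a1, a2, a3]; ring
  set x0 : Fin T → Fin 3 := fun t => if t = t0 then 0 else 2 with hx0
  rw [hVT, Finset.sum_eq_single x0]
  · have hx0t0 : x0 t0 = 0 := by simp [hx0]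
    have hPx0 : P x0 = φ := by
      rw [hP]
      rw [if_pos hx0t0, if_pos]
      intro t ht
      simp [hx0, ht]
    have hsum : ∑ t : Fin T, v x0 t = ((T:ℝ) - 1) * (1 - ψ) := by
      have key : ∀ t : Fin T, v x0 t = (1 - ψ) - (if t = t0 then (1 - ψ) else 0) := by
        intro t
        by_cases h : t = t0
        · simp [h, hvt0]
        · simp [h, hv1 x0 t hx0t0 h]
      rw [Finset.sum_congr rfl fun t _ => key t, Finset.sum_sub_distrib,
        Finset.sum_const, Finset.sum_ite_eq' Finset.univ t0]
      simp [Finset.card_univ]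
      ring
    rw [hPx0, hsum]
    field_simp
  · intro x _ hxne
    by_cases hx : x t0 = 0
    · have : P x = 0 := by
        rw [hP, if_pos hx, if_neg]
        intro hall
        apply hxne
        funext t
        by_cases h : t = t0
        · rw [h, hx]; simp [hx0]
        · rw [hall t h]; simp [hx0, h]
      rw [this]; ring
    · have : ∑ t, v x t = 0 := by
        apply Finset.sum_eq_zero
        intro t _
        exact hv0 x t hx
      rw [this]; ring
  · intro h; exact absurd (Finset.mem_univ x0) h
end

section
/- For every C > 0, α ∈ [0,1), β ∈ [0,1/2), and every function ε: ℕ × (0,1] → [0,∞) with ε(T,δ) → 0 as T → ∞ for each fixed δ, there exist T, probability distributions P and Q on {0,1,2}^T, a Q-optimal prediction policy, and δ ∈ (0,1) such that with probability at least δ under P, the average per-round regret Δ (with classification loss) satisfies both Δ ≥ C·V_T·δ^{−α} + ε(T,δ) and Δ ≥ C·sqrt(KL(P‖Q)/T)·δ^{−β} + ε(T,δ). -/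
open scoped Classical


noncomputable def stmt18k (T : ℕ) (δ : ℝ) (t : Fin T) (pfx : Fin t.val → Fin 3) (z : Fin 3) : ℝ :=
  if ht : t.val = 0 then (if z = 2 then δ else if z = 0 then 1 - δ else 0)
  else if pfx ⟨0, Nat.pos_of_ne_zero ht⟩ = 2 then (if z = 1 then 1 else 0)
  else if z = 2 then 0 else 1/2

noncomputable def stmt18e (T : ℕ) (δ : ℝ) (t : Fin T) (_pfx : Fin t.val → Fin 3) (z : Fin 3) : ℝ :=
  if t.val = 0 then (if z = 2 then δ else if z = 0 then 1 - δ else 0)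
  else if z = 2 then 0 else 1/2

def stmt18bp (T : ℕ) (t : Fin T) (pfx : Fin t.val → Fin 3) : Fin 3 :=
  if ht : t.val = 0 then 0 else if pfx ⟨0, Nat.pos_of_ne_zero ht⟩ = 2 then 1 else 0

def stmt18x (T : ℕ) : Fin T → Fin 3 := fun t => if t.val = 0 then 2 else 1

section
variable {T : ℕ} {δ : ℝ}

lemma stmt18k_nonneg (hδ0 : 0 < δ) (hδh : δ ≤ 1/2) (t : Fin T) (pfx : Fin t.val → Fin 3)
    (z : Fin 3) : 0 ≤ stmt18k T δ t pfx z := by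
  unfold stmt18k; split_ifs <;> linarith

lemma stmt18e_nonneg (hδ0 : 0 < δ) (hδh : δ ≤ 1/2) (t : Fin T) (pfx : Fin t.val → Fin 3)
    (z : Fin 3) : 0 ≤ stmt18e T δ t pfx z := by
  unfold stmt18e; split_ifs <;> linarith

lemma stmt18k_sum (t : Fin T) (pfx : Fin t.val → Fin 3) :
    ∑ z, stmt18k T δ t pfx z = 1 := by
  unfold stmt18k
  rw [Fin.sum_univ_three]
  split_ifs <;> simp_all <;> norm_num

lemma stmt18e_sum (t : Fin T) (pfx : Fin t.val → Fin 3) :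
    ∑ z, stmt18e T δ t pfx z = 1 := by
  unfold stmt18e
  rw [Fin.sum_univ_three]
  split_ifs <;> simp_all <;> norm_num

lemma stmt18e_opt (hδ0 : 0 < δ) (hδh : δ ≤ 1/2) (t : Fin T) (pfx : Fin t.val → Fin 3)
    (b' : Fin 3) :
    ∑ z, stmt18e T δ t pfx z * (if (0 : Fin 3) = z then (0 : ℝ) else 1) ≤
      ∑ z, stmt18e T δ t pfx z * (if b' = z then (0 : ℝ) else 1) := by
  unfold stmt18e
  rw [Fin.sum_univ_three, Fin.sum_univ_three]
  fin_cases b' <;> by_cases ht : t.val = 0 <;> simp [ht] <;> norm_num <;> linarith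

lemma stmt18k_opt (hδ0 : 0 < δ) (hδh : δ ≤ 1/2) (t : Fin T) (pfx : Fin t.val → Fin 3)
    (b' : Fin 3) :
    ∑ z, stmt18k T δ t pfx z * (if stmt18bp T t pfx = z then (0 : ℝ) else 1) ≤
      ∑ z, stmt18k T δ t pfx z * (if b' = z then (0 : ℝ) else 1) := by
  unfold stmt18k stmt18bp
  rw [Fin.sum_univ_three, Fin.sum_univ_three]
  by_cases ht : t.val = 0
  · fin_cases b' <;> simp [ht] <;> norm_num <;> linarith
  · by_cases hp : pfx ⟨0, Nat.pos_of_ne_zero ht⟩ = 2 <;>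
      fin_cases b' <;> simp [ht, hp] <;> norm_num <;> linarith

end

section
variable {T : ℕ} {δ : ℝ}

lemma stmt18_v_le (x : Fin T → Fin 3) (t : Fin T) :
    (1/2 : ℝ) * ∑ z, |stmt18k T δ t (fun i => x ⟨i.val, i.isLt.trans t.isLt⟩) z
      - stmt18e T δ t (fun i => x ⟨i.val, i.isLt.trans t.isLt⟩) z| ∈
      Set.Icc (0 : ℝ) (1/2) := by
  constructor
  · positivity
  · rw [Fin.sum_univ_three]
    by_cases ht : t.val = 0
    · simp [stmt18k, stmt18e, ht]
    · by_cases hp : x ⟨0, (Nat.pos_of_ne_zero ht).trans t.isLt⟩ = 2 <;>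
        simp [stmt18k, stmt18e, ht, hp] <;> norm_num

lemma stmt18_v_zero (hT : 0 < T) (x : Fin T → Fin 3) (h0 : x ⟨0, hT⟩ ≠ 2) (t : Fin T) :
    (1/2 : ℝ) * ∑ z, |stmt18k T δ t (fun i => x ⟨i.val, i.isLt.trans t.isLt⟩) z
      - stmt18e T δ t (fun i => x ⟨i.val, i.isLt.trans t.isLt⟩) z| = 0 := by
  by_cases ht : t.val = 0
  · simp [stmt18k, stmt18e, ht]
  · have h0' : x ⟨0, (Nat.pos_of_ne_zero ht).trans t.isLt⟩ ≠ 2 := h0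
    simp [stmt18k, stmt18e, ht, h0']

lemma stmt18_PeqQ (hT : 0 < T) (x : Fin T → Fin 3) (h0 : x ⟨0, hT⟩ ≠ 2) :
    ∏ t : Fin T, stmt18k T δ t (fun i => x ⟨i.val, i.isLt.trans t.isLt⟩) (x t) =
    ∏ t : Fin T, stmt18e T δ t (fun i => x ⟨i.val, i.isLt.trans t.isLt⟩) (x t) := by
  refine Finset.prod_congr rfl fun t _ => ?_
  by_cases ht : t.val = 0
  · simp [stmt18k, stmt18e, ht]
  · have h0' : x ⟨0, (Nat.pos_of_ne_zero ht).trans t.isLt⟩ ≠ 2 := h0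
    simp [stmt18k, stmt18e, ht, h0']

lemma stmt18_delta (hT : 0 < T) :
    (1 / (T : ℝ)) * ∑ t : Fin T,
      ((if (0 : Fin 3) = stmt18x T t then (0 : ℝ) else 1)
        - (if stmt18bp T t (fun i => stmt18x T ⟨i.val, i.isLt.trans t.isLt⟩) = stmt18x T t
            then (0 : ℝ) else 1)) = ((T : ℝ) - 1) / T := by
  have hterm : ∀ t : Fin T,
      ((if (0 : Fin 3) = stmt18x T t then (0 : ℝ) else 1)
        - (if stmt18bp T t (fun i => stmt18x T ⟨i.val, i.isLt.trans t.isLt⟩) = stmt18x T t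
            then (0 : ℝ) else 1)) = (1 - if t = ⟨0, hT⟩ then (1:ℝ) else 0) := by
    intro t
    by_cases ht : t.val = 0
    · have : t = ⟨0, hT⟩ := Fin.ext ht
      subst this
      simp [stmt18bp, stmt18x]
    · have ht' : t ≠ ⟨0, hT⟩ := fun h => ht (by rw [h])
      simp [stmt18bp, stmt18x, ht, ht']
  rw [Finset.sum_congr rfl fun t _ => hterm t, Finset.sum_sub_distrib,
    Finset.sum_const, Finset.sum_ite_eq' Finset.univ (⟨0, hT⟩ : Fin T) (fun _ => (1:ℝ))]
  simp [div_eq_mul_inv, mul_comm]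

end

section
variable {T : ℕ} {δ : ℝ}

lemma stmt18_prod_k (hT : 0 < T) :
    ∏ t : Fin T, stmt18k T δ t (fun i => stmt18x T ⟨i.val, i.isLt.trans t.isLt⟩)
      (stmt18x T t) = δ := by
  rw [Finset.prod_eq_single (⟨0, hT⟩ : Fin T)]
  · simp [stmt18k, stmt18x]
  · intro t _ ht
    have htv : t.val ≠ 0 := fun h => ht (Fin.ext h)
    simp [stmt18k, stmt18x, htv]
  · simp

lemma stmt18_prod_e (hT : 0 < T) :
    ∏ t : Fin T, stmt18e T δ t (fun i => stmt18x T ⟨i.val, i.isLt.trans t.isLt⟩)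
      (stmt18x T t) = δ * (1/2) ^ (T - 1) := by
  have : ∀ t : Fin T, stmt18e T δ t (fun i => stmt18x T ⟨i.val, i.isLt.trans t.isLt⟩)
      (stmt18x T t) = if t.val = 0 then δ else 1/2 := by
    intro t
    by_cases ht : t.val = 0 <;> simp [stmt18e, stmt18x, ht]
  rw [Finset.prod_congr rfl (fun t _ => this t)]
  rw [Fin.prod_univ_eq_prod_range (fun i => if i = 0 then δ else (1/2 : ℝ)) T]
  rw [← Finset.mul_prod_erase (Finset.range T) _ (Finset.mem_range.mpr hT)]
  rw [Finset.prod_congr rfl (fun i hi => by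
    simp only [Finset.mem_erase] at hi
    simp [hi.1] : ∀ i ∈ (Finset.range T).erase 0,
      (if i = 0 then δ else (1/2:ℝ)) = 1/2)]
  rw [Finset.prod_const, Finset.card_erase_of_mem (Finset.mem_range.mpr hT),
    Finset.card_range]
  simp

lemma stmt18_Pzero (hT : 0 < T) (x : Fin T → Fin 3) (hx0 : x ⟨0, hT⟩ = 2)
    (hx : x ≠ stmt18x T) :
    ∏ t : Fin T, stmt18k T δ t (fun i => x ⟨i.val, i.isLt.trans t.isLt⟩) (x t) = 0 := by
  obtain ⟨t, ht⟩ := Function.ne_iff.mp hx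
  have htv : t.val ≠ 0 := by
    intro h
    have : t = ⟨0, hT⟩ := Fin.ext h
    rw [this] at ht
    exact ht (by simp [stmt18x, hx0])
  have hxt : x t ≠ 1 := by
    simpa [stmt18x, htv] using ht
  apply Finset.prod_eq_zero (Finset.mem_univ t)
  have hp : (⟨0, Nat.pos_of_ne_zero htv⟩ : Fin t.val).val = 0 := rfl
  simp [stmt18k, htv, hx0, hxt]

end

/-- Theorem 4 (impossibility result): for every `C > 0`, `α ∈ [0,1)`,
`β ∈ [0,1/2)` and every vanishing error term `ε(T,δ)`, there is a prediction
problem on `{0,1,2}` with classification loss, a distribution `Q` (given by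
kernels `η`), a `Q`-optimal policy `bQ`, a `P`-optimal comparator `bP` and
`δ ∈ (0,1)` such that with probability at least `δ` under `P`, the average
per-round regret satisfies both
`Δ ≥ C·V_T·δ^{−α} + ε(T,δ)` and `Δ ≥ C·sqrt(KL(P‖Q)/T)·δ^{−β} + ε(T,δ)`. -/
theorem stmt_18 (C : ℝ) (hC : 0 < C) (α β : ℝ)
    (hα : α ∈ Set.Ico (0 : ℝ) 1) (hβ : β ∈ Set.Ico (0 : ℝ) (1 / 2))
    (ε : ℕ → ℝ → ℝ) (hε0 : ∀ T δ, 0 ≤ ε T δ)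
    (hεlim : ∀ δ ∈ Set.Ioc (0 : ℝ) 1,
      Filter.Tendsto (fun T => ε T δ) Filter.atTop (nhds 0)) :
    ∃ (T : ℕ) (_ : 0 < T)
      (κ η : (t : Fin T) → (Fin t.val → Fin 3) → Fin 3 → ℝ)
      (bQ bP : (t : Fin T) → (Fin t.val → Fin 3) → Fin 3)
      (δ : ℝ), δ ∈ Set.Ioo (0 : ℝ) 1 ∧
      -- `κ` and `η` are Markov kernels
      (∀ t pfx z, 0 ≤ κ t pfx z) ∧ (∀ t pfx, ∑ z, κ t pfx z = 1) ∧
      (∀ t pfx z, 0 ≤ η t pfx z) ∧ (∀ t pfx, ∑ z, η t pfx z = 1) ∧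
      -- `bQ` is Bayes optimal for `Q`, `bP` is Bayes optimal for `P` (classification loss)
      (∀ t pfx b', ∑ z, η t pfx z * (if bQ t pfx = z then (0 : ℝ) else 1) ≤
        ∑ z, η t pfx z * (if b' = z then (0 : ℝ) else 1)) ∧
      (∀ t pfx b', ∑ z, κ t pfx z * (if bP t pfx = z then (0 : ℝ) else 1) ≤
        ∑ z, κ t pfx z * (if b' = z then (0 : ℝ) else 1)) ∧
      -- for `P`, `Q`, `Δ`, `V_T` and `KL` defined from the kernels and policies as usual,
      -- both regret lower bounds hold simultaneously with `P`-probability at least `δ`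
      (∀ (P Q : (Fin T → Fin 3) → ℝ) (Δ : (Fin T → Fin 3) → ℝ)
          (v : (Fin T → Fin 3) → Fin T → ℝ) (VT KL : ℝ),
        (∀ x, P x = ∏ t, κ t (fun i => x ⟨i.val, i.isLt.trans t.isLt⟩) (x t)) →
        (∀ x, Q x = ∏ t, η t (fun i => x ⟨i.val, i.isLt.trans t.isLt⟩) (x t)) →
        (∀ x, Δ x = (1 / (T : ℝ)) * ∑ t,
          ((if bQ t (fun i => x ⟨i.val, i.isLt.trans t.isLt⟩) = x t then (0 : ℝ) else 1)
            - (if bP t (fun i => x ⟨i.val, i.isLt.trans t.isLt⟩) = x t then (0 : ℝ) else 1))) →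
        (∀ x t, v x t = (1 / 2) * ∑ z,
          |κ t (fun i => x ⟨i.val, i.isLt.trans t.isLt⟩) z
            - η t (fun i => x ⟨i.val, i.isLt.trans t.isLt⟩) z|) →
        VT = (∑ x, P x * ((1 / (T : ℝ)) * ∑ t, v x t)) →
        KL = (∑ x, P x * Real.log (P x / Q x)) →
        δ ≤ ∑ x ∈ Finset.univ.filter (fun x : Fin T → Fin 3 =>
            C * VT * δ ^ (-α) + ε T δ ≤ Δ x ∧
            C * Real.sqrt (KL / T) * δ ^ (-β) + ε T δ ≤ Δ x), P x) := by
  obtain ⟨hα0, hα1⟩ := hα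
  obtain ⟨hβ0, hβ1⟩ := hβ
  -- choose δ
  set s : ℝ := min (1 - α) (1/2 - β) with hs_def
  have hs0 : 0 < s := lt_min (by linarith) (by linarith)
  have hsh : s ≤ 1/2 := le_trans (min_le_right _ _) (by linarith)
  set c : ℝ := 1 / (4*C + 4) with hc_def
  have hc0 : 0 < c := by positivity
  have hch : c ≤ 1/2 := by rw [hc_def, div_le_div_iff₀ (by linarith) (by norm_num)]; linarith
  have hc1 : c < 1 := lt_of_le_of_lt hch (by norm_num)
  set δ : ℝ := c ^ ((1:ℝ)/s) with hδ_def
  have hδ0 : 0 < δ := Real.rpow_pos_of_pos hc0 _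
  have hδc : δ ≤ c := by
    have h1s : (1:ℝ) ≤ 1/s := by rw [le_div_iff₀ hs0]; linarith
    calc δ = c ^ ((1:ℝ)/s) := hδ_def
      _ ≤ c ^ (1:ℝ) := Real.rpow_le_rpow_of_exponent_ge hc0 hc1.le h1s
      _ = c := Real.rpow_one c
  have hδh : δ ≤ 1/2 := hδc.trans hch
  have hδ1 : δ < 1 := lt_of_le_of_lt hδc hc1
  have hδs_eq : δ ^ s = c := by
    rw [hδ_def, ← Real.rpow_mul hc0.le, one_div, inv_mul_cancel₀ hs0.ne', Real.rpow_one]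
  have hδs : C * δ ^ s ≤ 1/4 := by
    rw [hδs_eq, hc_def, mul_one_div, div_le_div_iff₀ (by linarith) (by norm_num)]
    linarith
  -- choose T
  obtain ⟨N, hN⟩ := Filter.eventually_atTop.mp
    ((hεlim δ ⟨hδ0, hδ1.le⟩).eventually_lt_const (by norm_num : (0:ℝ) < 1/4))
  set T : ℕ := max N 4 with hT_def
  have hT4 : (4:ℕ) ≤ T := le_max_right N 4
  have hT0 : 0 < T := by omega
  have hεT : ε T δ < 1/4 := hN T (le_max_left N 4)
  have hTR : (4:ℝ) ≤ (T:ℝ) := by exact_mod_cast hT4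
  have hTR0 : (0:ℝ) < (T:ℝ) := by linarith
  have h34 : (3:ℝ)/4 ≤ ((T:ℝ) - 1) / T := by
    rw [le_div_iff₀ hTR0]; linarith
  refine ⟨T, hT0, stmt18k T δ, stmt18e T δ, (fun _ _ => 0), stmt18bp T, δ, ⟨hδ0, hδ1⟩,
    stmt18k_nonneg hδ0 hδh, fun t pfx => stmt18k_sum t pfx,
    stmt18e_nonneg hδ0 hδh, fun t pfx => stmt18e_sum t pfx,
    fun t pfx b' => stmt18e_opt hδ0 hδh t pfx b',
    fun t pfx b' => stmt18k_opt hδ0 hδh t pfx b', ?_⟩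
  intro P Q Δ v VT KL hP hQ hΔ hv hVT hKL
  have hPxs : P (stmt18x T) = δ := by rw [hP]; exact stmt18_prod_k hT0
  have hQxs : Q (stmt18x T) = δ * (1/2) ^ (T - 1) := by rw [hQ]; exact stmt18_prod_e hT0
  have hPnn : ∀ x, 0 ≤ P x := fun x => by
    rw [hP]; exact Finset.prod_nonneg fun t _ => stmt18k_nonneg hδ0 hδh t _ _
  have hΔxs : Δ (stmt18x T) = ((T:ℝ) - 1) / T := by rw [hΔ]; exact stmt18_delta hT0
  -- VT bound
  have hVTb : VT ≤ δ / 2 := by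
    rw [hVT]
    calc ∑ x, P x * ((1 / (T:ℝ)) * ∑ t, v x t)
        ≤ ∑ x : Fin T → Fin 3, (if x = stmt18x T then δ/2 else 0) := by
          refine Finset.sum_le_sum fun x _ => ?_
          by_cases hx0 : x ⟨0, hT0⟩ = 2
          · by_cases hx : x = stmt18x T
            · rw [if_pos hx, hx, hPxs]
              have hvle : ∀ t, v (stmt18x T) t ≤ 1/2 := fun t => by
                rw [hv]; exact (stmt18_v_le (stmt18x T) t).2
              have hvnn : ∀ t, 0 ≤ v (stmt18x T) t := fun t => by
                rw [hv]; exact (stmt18_v_le (stmt18x T) t).1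
              have hsum : ∑ t, v (stmt18x T) t ≤ (T:ℝ) * (1/2) := by
                calc ∑ t, v (stmt18x T) t ≤ ∑ _t : Fin T, (1/2:ℝ) :=
                      Finset.sum_le_sum fun t _ => hvle t
                  _ = (T:ℝ) * (1/2) := by simp [mul_comm]
              have hin : (1 / (T:ℝ)) * ∑ t, v (stmt18x T) t ≤ 1/2 := by
                have := mul_le_mul_of_nonneg_left hsum (by positivity : (0:ℝ) ≤ 1/(T:ℝ))
                calc (1 / (T:ℝ)) * ∑ t, v (stmt18x T) t ≤ (1/(T:ℝ)) * ((T:ℝ) * (1/2)) := this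
                  _ = 1/2 := by field_simp
              calc δ * ((1 / (T:ℝ)) * ∑ t, v (stmt18x T) t) ≤ δ * (1/2) :=
                    mul_le_mul_of_nonneg_left hin hδ0.le
                _ = δ/2 := by ring
            · rw [if_neg hx]
              have hP0 : P x = 0 := by rw [hP]; exact stmt18_Pzero hT0 x hx0 hx
              rw [hP0, zero_mul]
          · have hx : x ≠ stmt18x T := fun h => hx0 (by rw [h]; rfl)
            rw [if_neg hx]
            have hv0 : ∀ t, v x t = 0 := fun t => by
              rw [hv]; exact stmt18_v_zero hT0 x hx0 t
            simp [hv0]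
      _ = δ/2 := by rw [Finset.sum_ite_eq' Finset.univ]; simp
  -- KL bound
  have hKLb : KL ≤ δ * T := by
    rw [hKL]
    calc ∑ x, P x * Real.log (P x / Q x)
        ≤ ∑ x : Fin T → Fin 3, (if x = stmt18x T then δ * T else 0) := by
          refine Finset.sum_le_sum fun x _ => ?_
          by_cases hx : x = stmt18x T
          · rw [if_pos hx, hx, hPxs, hQxs]
            have hpow : (0:ℝ) < (1/2) ^ (T-1) := by positivity
            have hratio : δ / (δ * (1/2) ^ (T-1)) = (2:ℝ) ^ (T-1) := by
              rw [one_div, inv_pow]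
              field_simp
            rw [hratio, Real.log_pow]
            have hlog2 : Real.log 2 ≤ 1 := by
              have := Real.log_two_lt_d9
              linarith
            have hlognn : 0 ≤ Real.log 2 := Real.log_nonneg (by norm_num)
            have hc1' : ((T - 1 : ℕ):ℝ) ≤ (T:ℝ) := by
              exact_mod_cast Nat.sub_le T 1
            have hc2' : (0:ℝ) ≤ ((T - 1 : ℕ):ℝ) := Nat.cast_nonneg _
            calc δ * (((T-1:ℕ):ℝ) * Real.log 2) ≤ δ * ((T:ℝ) * 1) := by
                  refine mul_le_mul_of_nonneg_left ?_ hδ0.le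
                  exact mul_le_mul hc1' hlog2 hlognn (by linarith)
              _ = δ * T := by ring
          · rw [if_neg hx]
            by_cases hx0 : x ⟨0, hT0⟩ = 2
            · have hP0 : P x = 0 := by rw [hP]; exact stmt18_Pzero hT0 x hx0 hx
              rw [hP0, zero_mul]
            · have hPQ : Q x = P x := by rw [hP, hQ]; exact (stmt18_PeqQ hT0 x hx0).symm
              rw [hPQ]
              by_cases hP0 : P x = 0
              · rw [hP0, zero_mul]
              · rw [div_self hP0, Real.log_one, mul_zero]
      _ = δ * T := by rw [Finset.sum_ite_eq' Finset.univ]; simp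
  -- the two conditions at the trap path
  have hrexp : ∀ e' : ℝ, s ≤ e' → δ ^ e' ≤ δ ^ s := fun e' he' =>
    Real.rpow_le_rpow_of_exponent_ge hδ0 hδ1.le he'
  have cond1 : C * VT * δ ^ (-α) + ε T δ ≤ Δ (stmt18x T) := by
    rw [hΔxs]
    have h1 : C * VT * δ ^ (-α) ≤ C * (δ/2) * δ ^ (-α) :=
      mul_le_mul_of_nonneg_right (mul_le_mul_of_nonneg_left hVTb hC.le)
        (Real.rpow_nonneg hδ0.le _)
    have h2 : C * (δ/2) * δ ^ (-α) = (C/2) * δ ^ ((1:ℝ) - α) := by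
      rw [show (1:ℝ) - α = 1 + (-α) by ring, Real.rpow_add hδ0, Real.rpow_one]
      ring
    have h3 : δ ^ ((1:ℝ) - α) ≤ δ ^ s := hrexp _ (min_le_left _ _)
    have h4 : (C/2) * δ ^ ((1:ℝ) - α) ≤ 1/8 := by
      have := mul_le_mul_of_nonneg_left h3 (by linarith : (0:ℝ) ≤ C/2)
      have h5 : (C/2) * δ ^ s ≤ 1/8 := by
        have : C * δ ^ s ≤ 1/4 := hδs
        linarith
      linarith
    linarith
  have cond2 : C * Real.sqrt (KL / T) * δ ^ (-β) + ε T δ ≤ Δ (stmt18x T) := by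
    rw [hΔxs]
    have h1 : KL / T ≤ δ := by
      rw [div_le_iff₀ hTR0]; linarith
    have h2 : Real.sqrt (KL / T) ≤ Real.sqrt δ := Real.sqrt_le_sqrt h1
    have h3 : Real.sqrt δ = δ ^ ((1:ℝ)/2) := Real.sqrt_eq_rpow δ
    have h4 : C * Real.sqrt (KL / T) * δ ^ (-β) ≤ C * δ ^ ((1:ℝ)/2) * δ ^ (-β) := by
      refine mul_le_mul_of_nonneg_right ?_ (Real.rpow_nonneg hδ0.le _)
      rw [← h3]
      exact mul_le_mul_of_nonneg_left h2 hC.le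
    have h5 : C * δ ^ ((1:ℝ)/2) * δ ^ (-β) = C * δ ^ ((1:ℝ)/2 - β) := by
      rw [show (1:ℝ)/2 - β = 1/2 + (-β) by ring, Real.rpow_add hδ0]
      ring
    have h6 : δ ^ ((1:ℝ)/2 - β) ≤ δ ^ s := hrexp _ (min_le_right _ _)
    have h7 : C * δ ^ ((1:ℝ)/2 - β) ≤ 1/4 :=
      le_trans (mul_le_mul_of_nonneg_left h6 hC.le) hδs
    linarith
  have hmem : stmt18x T ∈ Finset.univ.filter (fun x : Fin T → Fin 3 =>
      C * VT * δ ^ (-α) + ε T δ ≤ Δ x ∧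
      C * Real.sqrt (KL / T) * δ ^ (-β) + ε T δ ≤ Δ x) :=
    Finset.mem_filter.mpr ⟨Finset.mem_univ _, cond1, cond2⟩
  calc δ = P (stmt18x T) := hPxs.symm
    _ ≤ _ := Finset.single_le_sum (fun x _ => hPnn x) hmem
end
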